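/- For all x, y ∈ ℂⁿ one has arccos( |1 + Σᵢ xᵢ·conj(yᵢ)| / (√(1+‖x‖²)·√(1+‖y‖²)) ) ≤ ‖x − y‖; that is, the Fubini–Study (projective) distance between the projective points (1:x₁:⋯:xₙ) and (1:y₁:⋯:yₙ) in ℂP^n is at most the affine Euclidean distance ‖x − y‖. -/

import Mathlib

open Real

/-- For `0 ≤ u ≤ π/2`, `u ≤ sin u * √(1+u²)`. -/
lemma aux_sin_sqrt {u : ℝ} (hu0 : 0 ≤ u) (hu2 : u ≤ π / 2) :
    u ≤ Real.sin u * Real.sqrt (1 + u ^ 2) := by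
  have hs : Real.sqrt (1 + u ^ 2) > 0 := Real.sqrt_pos.2 (by positivity)
  have hat0 : 0 ≤ Real.arctan u := by
    have := Real.arctan_strictMono.monotone hu0
    rwa [Real.arctan_zero] at this
  have harctan : Real.arctan u ≤ u := by
    calc Real.arctan u ≤ Real.tan (Real.arctan u) :=
          Real.le_tan hat0 (Real.arctan_lt_pi_div_two u)
      _ = u := Real.tan_arctan u
  have hsin : Real.sin (Real.arctan u) ≤ Real.sin u := by
    have h1 : Real.arctan u ∈ Set.Icc (-(π/2)) (π/2) :=
      ⟨by linarith [Real.pi_pos], (Real.arctan_lt_pi_div_two u).le⟩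
    have h2 : u ∈ Set.Icc (-(π/2)) (π/2) := ⟨by linarith [Real.pi_pos], hu2⟩
    exact Real.strictMonoOn_sin.monotoneOn h1 h2 harctan
  rw [Real.sin_arctan] at hsin
  calc u = u / Real.sqrt (1 + u ^ 2) * Real.sqrt (1 + u ^ 2) := by field_simp
    _ ≤ Real.sin u * Real.sqrt (1 + u ^ 2) := by
        exact mul_le_mul_of_nonneg_right hsin hs.le

/-- Key scalar inequality: if `0 ≤ d ≤ π` and `d² ≤ 2S`, then
`cos d * (1 + S/2) ≤ 1 + S/2 - d²/2`. -/
lemma aux_key {d S : ℝ} (hd0 : 0 ≤ d) (hdpi : d ≤ π) (hS : d ^ 2 ≤ 2 * S) :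
    Real.cos d * (1 + S / 2) ≤ 1 + S / 2 - d ^ 2 / 2 := by
  -- equivalent to d²/2 ≤ (1 - cos d)(1 + S/2)
  have hcos : 1 - Real.cos d = 2 * Real.sin (d / 2) ^ 2 := by
    have h1 : Real.cos (2 * (d / 2)) = 2 * Real.cos (d / 2) ^ 2 - 1 := Real.cos_two_mul (d / 2)
    have h2 : Real.sin (d / 2) ^ 2 + Real.cos (d / 2) ^ 2 = 1 := Real.sin_sq_add_cos_sq (d / 2)
    rw [show 2 * (d / 2) = d by ring] at h1
    linarith
  have hu := aux_sin_sqrt (by linarith : (0:ℝ) ≤ d / 2) (by linarith : d / 2 ≤ π / 2)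
  -- square it: (d/2)² ≤ sin²(d/2)(1+(d/2)²)
  have hsq : (d / 2) ^ 2 ≤ Real.sin (d / 2) ^ 2 * (1 + (d / 2) ^ 2) := by
    have hnn : 0 ≤ Real.sin (d / 2) * Real.sqrt (1 + (d / 2) ^ 2) := le_trans (by linarith) hu
    have h := mul_self_le_mul_self (by linarith) hu
    have hss : Real.sqrt (1 + (d / 2) ^ 2) * Real.sqrt (1 + (d / 2) ^ 2) = 1 + (d / 2) ^ 2 :=
      Real.mul_self_sqrt (by positivity)
    nlinarith [hss]
  have hcosd : 1 - Real.cos d ≥ 0 := by nlinarith [Real.cos_le_one d]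
  nlinarith [hsq, hcos, hcosd, hS]

/-- The projective (Fubini–Study) distance between `(1:x)` and `(1:y)` is at most the affine
Euclidean distance `‖x − y‖`:
`arccos(|1 + Σᵢ xᵢ conj(yᵢ)| / (√(1+‖x‖²) √(1+‖y‖²))) ≤ ‖x − y‖`. -/
theorem projective_dist_le_affine_dist (n : ℕ) (x y : EuclideanSpace ℂ (Fin n)) :
    Real.arccos (‖1 + ∑ i, x i * starRingEnd ℂ (y i)‖ /
        (Real.sqrt (1 + ‖x‖ ^ 2) * Real.sqrt (1 + ‖y‖ ^ 2)))
      ≤ ‖x - y‖ := by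
  set d := ‖x - y‖ with hd
  have hd0 : 0 ≤ d := norm_nonneg _
  by_cases hdpi : π ≤ d
  · exact (Real.arccos_le_pi _).trans hdpi
  push_neg at hdpi
  set s : ℂ := ∑ i, x i * starRingEnd ℂ (y i) with hs
  set N := ‖(1 : ℂ) + s‖ with hN
  set A := Real.sqrt (1 + ‖x‖ ^ 2) with hA
  set B := Real.sqrt (1 + ‖y‖ ^ 2) with hB
  have hApos : 0 < A := Real.sqrt_pos.2 (by positivity)
  have hBpos : 0 < B := Real.sqrt_pos.2 (by positivity)
  have hABpos : 0 < A * B := mul_pos hApos hBpos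
  -- s = ⟪y, x⟫
  have hs_inner : s = @inner ℂ _ _ y x := by
    rw [hs, PiLp.inner_apply]
    refine Finset.sum_congr rfl fun i _ => ?_
    simp [mul_comm]
  -- N ≥ 1 + re s
  have hNre : 1 + Complex.re s ≤ N := by
    have := Complex.re_le_norm (1 + s)
    simpa using this
  -- d² = ‖y‖² - 2 re s + ‖x‖²  (since s = ⟪y,x⟫ and ‖x-y‖ = ‖y-x‖)
  have hdsq : d ^ 2 = ‖y‖ ^ 2 - 2 * Complex.re s + ‖x‖ ^ 2 := by
    rw [hd, ← norm_neg, neg_sub, hs_inner]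
    exact @norm_sub_sq ℂ _ _ _ _ y x
  -- d ≤ ‖x‖ + ‖y‖ so d² ≤ 2(‖x‖² + ‖y‖²)
  have hdle : d ≤ ‖x‖ + ‖y‖ := norm_sub_le x y
  have hd2 : d ^ 2 ≤ 2 * (‖x‖ ^ 2 + ‖y‖ ^ 2) := by
    nlinarith [mul_self_le_mul_self hd0 hdle, sq_nonneg (‖x‖ - ‖y‖)]
  -- A * B ≤ 1 + (‖x‖² + ‖y‖²)/2
  have hAB : A * B ≤ 1 + (‖x‖ ^ 2 + ‖y‖ ^ 2) / 2 := by
    rw [hA, hB, ← Real.sqrt_mul (by positivity)]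
    have h1 : (1 + ‖x‖ ^ 2) * (1 + ‖y‖ ^ 2) ≤ (1 + (‖x‖ ^ 2 + ‖y‖ ^ 2) / 2) ^ 2 := by
      nlinarith [sq_nonneg (‖x‖ ^ 2 - ‖y‖ ^ 2)]
    calc Real.sqrt ((1 + ‖x‖ ^ 2) * (1 + ‖y‖ ^ 2))
        ≤ Real.sqrt ((1 + (‖x‖ ^ 2 + ‖y‖ ^ 2) / 2) ^ 2) := Real.sqrt_le_sqrt h1
      _ = 1 + (‖x‖ ^ 2 + ‖y‖ ^ 2) / 2 := Real.sqrt_sq (by positivity)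
  -- main: cos d * (A * B) ≤ N
  have hmain : Real.cos d * (A * B) ≤ N := by
    rcases le_or_gt (Real.cos d) 0 with hc | hc
    · have : Real.cos d * (A * B) ≤ 0 := mul_nonpos_of_nonpos_of_nonneg hc hABpos.le
      exact this.trans (norm_nonneg _)
    · have hkey := aux_key hd0 hdpi.le hd2
      calc Real.cos d * (A * B) ≤ Real.cos d * (1 + (‖x‖ ^ 2 + ‖y‖ ^ 2) / 2) :=
            mul_le_mul_of_nonneg_left hAB hc.le
        _ ≤ 1 + (‖x‖ ^ 2 + ‖y‖ ^ 2) / 2 - d ^ 2 / 2 := hkey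
        _ = 1 + Complex.re s := by rw [hdsq]; ring
        _ ≤ N := hNre
  -- conclude via arccos
  have hcosle : Real.cos d ≤ N / (A * B) := (le_div_iff₀ hABpos).2 hmain
  rcases le_or_gt (N / (A * B)) 1 with hle1 | hgt1
  · by_contra hcon
    push_neg at hcon
    have hmem1 : d ∈ Set.Icc 0 π := ⟨hd0, hdpi.le⟩
    have hmem2 : Real.arccos (N / (A * B)) ∈ Set.Icc 0 π :=
      ⟨Real.arccos_nonneg _, Real.arccos_le_pi _⟩
    have := Real.strictAntiOn_cos hmem1 hmem2 hcon
    rw [Real.cos_arccos (le_trans (by norm_num) (by positivity : (0:ℝ) ≤ N / (A*B))) hle1] at this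
    linarith
  · rw [Real.arccos_of_one_le hgt1.le]
    exact hd0
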